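/- Let D be a weighted digraph on a finite vertex set V and let χ be the minimum number of independent sets of D into which V can be partitioned (the chromatic number of the underlying graph of D). If χ is even then mac(D) ≥ (1/4 + 1/(4(χ−1)))·w(D), and if χ is odd then mac(D) ≥ (1/4 + 1/(4χ))·w(D). -/
import Mathlib


open scoped BigOperators Classical

noncomputable section

namespace PaperStmt

variable {V : Type*} [Fintype V]

/-- Total weight of a weighted digraph given by `w : V → V → ℝ`. -/
def totalWeight (w : V → V → ℝ) : ℝ := ∑ u, ∑ v, w u v

/-- Weight of the dicut `(X, Xᶜ)`. -/
def cutWeight (w : V → V → ℝ) (X : Finset V) : ℝ := ∑ x ∈ X, ∑ y ∈ Xᶜ, w x y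

/-- Maximum weight of a directed cut. -/
def mac (w : V → V → ℝ) : ℝ :=
  Finset.univ.sup' ⟨∅, Finset.mem_univ ∅⟩ (fun X : Finset V => cutWeight w X)

/-- `r(v) = w⁺(v) - w⁻(v)`. -/
def rv (w : V → V → ℝ) (v : V) : ℝ := (∑ u, w v u) - (∑ u, w u v)

/-- `r⁺(D) = ∑_{v : r(v) > 0} r(v)`. -/
def rPlus (w : V → V → ℝ) : ℝ :=
  ∑ v ∈ Finset.univ.filter (fun v => 0 < rv w v), rv w v

-- binomial identity
lemma nat_id (c j : ℕ) (hj : j ≤ c) :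
    Nat.choose (c+2) (j+1) * ((j+1) * (c+1-j)) = Nat.choose c j * ((c+2) * (c+1)) := by
  have h1 : (c+2) * Nat.choose (c+1) j = Nat.choose (c+2) (j+1) * (j+1) :=
    Nat.add_one_mul_choose_eq (c+1) j
  have h3 : Nat.choose c (c-j) = Nat.choose c j := Nat.choose_symm hj
  have h4 : Nat.choose (c+1) (c+1-(j)) = Nat.choose (c+1) j := Nat.choose_symm (by omega)
  have h2 : (c+1) * Nat.choose c (c-j) = Nat.choose (c+1) (c-j+1) * (c-j+1) :=
    Nat.add_one_mul_choose_eq c (c-j)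
  have he : c - j + 1 = c + 1 - j := by omega
  rw [he, h3, h4] at h2
  calc Nat.choose (c+2) (j+1) * ((j+1) * (c+1-j))
      = (Nat.choose (c+2) (j+1) * (j+1)) * (c+1-j) := by ring
    _ = ((c+2) * Nat.choose (c+1) j) * (c+1-j) := by rw [h1]
    _ = (c+2) * (Nat.choose (c+1) j * (c+1-j)) := by ring
    _ = (c+2) * ((c+1) * Nat.choose c j) := by rw [← h2]
    _ = Nat.choose c j * ((c+2) * (c+1)) := by ring

-- counting lemma
lemma count_lem {k : ℕ} (m : ℕ) (hm : 1 ≤ m) (hmk : m + 1 ≤ k) (a b : Fin k) (hab : a ≠ b) :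
    ((Finset.powersetCard m (Finset.univ : Finset (Fin k))).filter
      (fun S => a ∈ S ∧ b ∉ S)).card = Nat.choose (k - 2) (m - 1) := by
  have hcard : ((Finset.univ.erase b).erase a).card = k - 2 := by
    rw [Finset.card_erase_of_mem (Finset.mem_erase.2 ⟨hab, Finset.mem_univ a⟩),
      Finset.card_erase_of_mem (Finset.mem_univ b), Finset.card_univ, Fintype.card_fin]
    omega
  have := Finset.card_bij'
    (s := (Finset.powersetCard m (Finset.univ : Finset (Fin k))).filter
      (fun S => a ∈ S ∧ b ∉ S))
    (t := Finset.powersetCard (m-1) ((Finset.univ.erase b).erase a))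
    (fun S _ => S.erase a) (fun T _ => insert a T)
    (by
      intro S hS
      simp only [Finset.mem_filter, Finset.mem_powersetCard] at hS
      obtain ⟨⟨_, hScard⟩, haS, hbS⟩ := hS
      refine Finset.mem_powersetCard.2 ⟨?_, ?_⟩
      · intro x hx
        obtain ⟨hxa, hxS⟩ := Finset.mem_erase.1 hx
        exact Finset.mem_erase.2 ⟨hxa, Finset.mem_erase.2 ⟨fun h => hbS (h ▸ hxS), Finset.mem_univ x⟩⟩
      · rw [Finset.card_erase_of_mem haS, hScard])
    (by
      intro T hT
      obtain ⟨hTsub, hTcard⟩ := Finset.mem_powersetCard.1 hT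
      have haT : a ∉ T := fun h => (Finset.mem_erase.1 (hTsub h)).1 rfl
      refine Finset.mem_filter.2 ⟨Finset.mem_powersetCard.2 ⟨Finset.subset_univ _, ?_⟩,
        Finset.mem_insert_self a T, ?_⟩
      · rw [Finset.card_insert_of_notMem haT, hTcard]; omega
      · intro hb
        rcases Finset.mem_insert.1 hb with h | h
        · exact hab h.symm
        · exact (Finset.mem_erase.1 (Finset.mem_erase.1 (hTsub h)).2).1 rfl)
    (by
      intro S hS
      simp only [Finset.mem_filter] at hS
      exact Finset.insert_erase hS.2.1)
    (by
      intro T hT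
      obtain ⟨hTsub, _⟩ := Finset.mem_powersetCard.1 hT
      have haT : a ∉ T := fun h => (Finset.mem_erase.1 (hTsub h)).1 rfl
      exact Finset.erase_insert haT)
  rw [this, Finset.card_powersetCard, hcard]

lemma cutWeight_eq (w : V → V → ℝ) (X : Finset V) :
    cutWeight w X = ∑ u, ∑ v, if u ∈ X ∧ v ∉ X then w u v else 0 := by
  unfold cutWeight
  have h1 : (Finset.univ : Finset V).filter (fun u => u ∈ X) = X := by ext x; simp
  have h2 : (Finset.univ : Finset V).filter (fun v => v ∉ X) = Xᶜ := by ext x; simp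
  calc (∑ x ∈ X, ∑ y ∈ Xᶜ, w x y)
      = ∑ u ∈ Finset.univ.filter (fun u => u ∈ X),
          ∑ v ∈ Finset.univ.filter (fun v => v ∉ X), w u v := by rw [h1, h2]
    _ = ∑ u, if u ∈ X then ∑ v, (if v ∉ X then w u v else 0) else 0 := by
          rw [Finset.sum_filter]
          exact Finset.sum_congr rfl fun u _ => by
            by_cases h : u ∈ X <;> simp [h, Finset.sum_filter]
    _ = ∑ u, ∑ v, if u ∈ X ∧ v ∉ X then w u v else 0 := by
          refine Finset.sum_congr rfl fun u _ => ?_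
          by_cases h : u ∈ X <;> simp [h]

/-- Main averaging bound. -/
lemma avg_bound (w : V → V → ℝ) (_hnn : ∀ u v, 0 ≤ w u v) {k : ℕ}
    (f : V → Fin k) (hf : ∀ u v : V, f u = f v → w u v = 0)
    (m : ℕ) (hm : 1 ≤ m) (hmk : m + 1 ≤ k) :
    (Nat.choose (k-2) (m-1) : ℝ) * totalWeight w ≤ (Nat.choose k m : ℝ) * mac w := by
  classical
  set 𝒮 := Finset.powersetCard m (Finset.univ : Finset (Fin k)) with h𝒮
  have key : ∑ S ∈ 𝒮, cutWeight w (Finset.univ.filter (fun v => f v ∈ S))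
      = (Nat.choose (k-2) (m-1) : ℝ) * totalWeight w := by
    have hrw : ∀ S ∈ 𝒮, cutWeight w (Finset.univ.filter (fun v => f v ∈ S))
        = ∑ u, ∑ v, if f u ∈ S ∧ f v ∉ S then w u v else 0 := by
      intro S _
      rw [cutWeight_eq]
      refine Finset.sum_congr rfl fun u _ => Finset.sum_congr rfl fun v _ => ?_
      simp
    rw [Finset.sum_congr rfl hrw, Finset.sum_comm]
    unfold totalWeight
    rw [Finset.mul_sum]
    refine Finset.sum_congr rfl fun u _ => ?_
    rw [Finset.sum_comm, Finset.mul_sum]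
    refine Finset.sum_congr rfl fun v _ => ?_
    by_cases huv : f u = f v
    · have hw : w u v = 0 := hf u v huv
      simp [hw, huv]
    · rw [← Finset.sum_filter]
      rw [Finset.sum_const, count_lem m hm hmk (f u) (f v) huv]
      simp [nsmul_eq_mul]
  have hle : ∀ S ∈ 𝒮, cutWeight w (Finset.univ.filter (fun v => f v ∈ S)) ≤ mac w :=
    fun S _ => Finset.le_sup' (fun X : Finset V => cutWeight w X)
      (Finset.mem_univ (Finset.univ.filter (fun v => f v ∈ S)))
  have hcard : 𝒮.card = Nat.choose k m := by
    rw [h𝒮, Finset.card_powersetCard, Finset.card_univ, Fintype.card_fin]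
  calc (Nat.choose (k-2) (m-1) : ℝ) * totalWeight w
      = ∑ S ∈ 𝒮, cutWeight w (Finset.univ.filter (fun v => f v ∈ S)) := key.symm
    _ ≤ ∑ _S ∈ 𝒮, mac w := Finset.sum_le_sum hle
    _ = (Nat.choose k m : ℝ) * mac w := by rw [Finset.sum_const, hcard, nsmul_eq_mul]


theorem chromatic_lower_bound {V : Type*} [Fintype V] [Nonempty V]
    (w : V → V → ℝ) (hnn : ∀ u v, 0 ≤ w u v) (hdiag : ∀ v, w v v = 0) (χ : ℕ)
    (hχ : IsLeast {n : ℕ | ∃ f : V → Fin n, ∀ u v : V, f u = f v → w u v = 0} χ) :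
    (Even χ → (1 / 4 + 1 / (4 * ((χ : ℝ) - 1))) * totalWeight w ≤ mac w) ∧
    (Odd χ → (1 / 4 + 1 / (4 * (χ : ℝ))) * totalWeight w ≤ mac w) := by
  classical
  obtain ⟨f, hf⟩ := hχ.1
  have hχ0 : χ ≠ 0 := by
    rintro rfl
    exact (f (Classical.arbitrary V)).elim0
  have hW : 0 ≤ totalWeight w :=
    Finset.sum_nonneg fun u _ => Finset.sum_nonneg fun v _ => hnn u v
  have hmac : 0 ≤ mac w := by
    have h0 : cutWeight w ∅ = 0 := by simp [cutWeight]
    have h := Finset.le_sup' (fun X : Finset V => cutWeight w X)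
      (Finset.mem_univ (∅ : Finset V))
    unfold mac
    rw [← h0]
    exact h
  constructor
  · -- Even case
    rintro ⟨t, rfl⟩
    obtain ⟨c, rfl⟩ : ∃ c, t = c + 1 := ⟨t - 1, by omega⟩
    have hA := avg_bound w hnn f hf (c+1) (by omega) (by omega)
    have e1 : (c+1) + (c+1) - 2 = 2*c := by omega
    have e2 : (c+1) - 1 = c := by omega
    rw [e1, e2] at hA
    have hidn := nat_id (2*c) c (by omega)
    have e3 : 2*c+2 = (c+1)+(c+1) := by omega
    have e4 : 2*c+1-c = c+1 := by omega
    rw [e3, e4] at hidn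
    set a := Nat.choose (2*c) c with ha
    set b := Nat.choose ((c+1)+(c+1)) (c+1) with hb
    have hbpos : (0:ℝ) < (b:ℝ) := by
      exact_mod_cast Nat.choose_pos (by omega)
    have hid : (b:ℝ) * (((c:ℝ)+1) * ((c:ℝ)+1)) = (a:ℝ) * ((2*(c:ℝ)+2) * (2*(c:ℝ)+1)) := by
      have h5 := congrArg (Nat.cast : ℕ → ℝ) hidn
      push_cast at h5
      linarith [h5]
    have hCne : ((c:ℝ)+1) ≠ 0 := by positivity
    have h4 : (b:ℝ)*((c:ℝ)+1) = 2*(a:ℝ)*(2*(c:ℝ)+1) := by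
      apply mul_right_cancel₀ hCne
      linear_combination hid
    have key2 : (1/4 + 1/(4*(2*(c:ℝ)+1))) * (b:ℝ) = (a:ℝ) := by
      have hpos : (0:ℝ) < 2*(c:ℝ)+1 := by positivity
      field_simp
      linear_combination 2*h4
    have hcast : ((((c+1)+(c+1) : ℕ) : ℝ) - 1) = 2*(c:ℝ)+1 := by push_cast; ring
    rw [hcast]
    have := le_of_mul_le_mul_right (by
      calc (1/4 + 1/(4*(2*(c:ℝ)+1))) * totalWeight w * (b:ℝ)
          = ((1/4 + 1/(4*(2*(c:ℝ)+1))) * (b:ℝ)) * totalWeight w := by ring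
        _ = (a:ℝ) * totalWeight w := by rw [key2]
        _ ≤ (b:ℝ) * mac w := hA
        _ = mac w * (b:ℝ) := by ring) hbpos
    exact this
  · -- Odd case
    rintro ⟨t, rfl⟩
    rcases Nat.eq_zero_or_pos t with rfl | ht
    · -- χ = 1
      have hw0 : totalWeight w = 0 := by
        unfold totalWeight
        refine Finset.sum_eq_zero fun u _ => Finset.sum_eq_zero fun v _ => ?_
        refine hf u v (Fin.ext ?_)
        have h1 := (f u).isLt
        have h2 := (f v).isLt
        omega
      rw [hw0]
      simpa using hmac
    · obtain ⟨d, rfl⟩ : ∃ d, t = d + 1 := ⟨t - 1, by omega⟩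
      have hA := avg_bound w hnn f hf (d+2) (by omega) (by omega)
      have e1 : 2*(d+1)+1 - 2 = 2*d+1 := by omega
      have e2 : (d+2) - 1 = d+1 := by omega
      rw [e1, e2] at hA
      have hidn := nat_id (2*d+1) (d+1) (by omega)
      have e3 : 2*d+1+2 = 2*(d+1)+1 := by omega
      have e4 : 2*d+1+1-(d+1) = d+1 := by omega
      rw [e3, e4] at hidn
      set a := Nat.choose (2*d+1) (d+1) with ha
      set b := Nat.choose (2*(d+1)+1) (d+2) with hb
      have hbpos : (0:ℝ) < (b:ℝ) := by
        exact_mod_cast Nat.choose_pos (by omega)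
      have hid : (b:ℝ) * (((d:ℝ)+2) * ((d:ℝ)+1)) = (a:ℝ) * ((2*(d:ℝ)+3) * (2*(d:ℝ)+2)) := by
        have h5 := congrArg (Nat.cast : ℕ → ℝ) hidn
        push_cast at h5
        linarith [h5]
      have hDne : ((d:ℝ)+1) ≠ 0 := by positivity
      have h4 : (b:ℝ)*((d:ℝ)+2) = 2*(a:ℝ)*(2*(d:ℝ)+3) := by
        apply mul_right_cancel₀ hDne
        linear_combination hid
      have key2 : (1/4 + 1/(4*(2*(d:ℝ)+3))) * (b:ℝ) = (a:ℝ) := by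
        have hpos : (0:ℝ) < 2*(d:ℝ)+3 := by positivity
        field_simp
        linear_combination 2*h4
      have hcast : ((2*(d+1)+1 : ℕ) : ℝ) = 2*(d:ℝ)+3 := by push_cast; ring
      rw [hcast]
      have := le_of_mul_le_mul_right (by
        calc (1/4 + 1/(4*(2*(d:ℝ)+3))) * totalWeight w * (b:ℝ)
            = ((1/4 + 1/(4*(2*(d:ℝ)+3))) * (b:ℝ)) * totalWeight w := by ring
          _ = (a:ℝ) * totalWeight w := by rw [key2]
          _ ≤ (b:ℝ) * mac w := hA
          _ = mac w * (b:ℝ) := by ring) hbpos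
      exact this


end PaperStmt
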